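/- Let d ≥ 1 be a natural number, r > 0, and S a finite set of points in Fin d → ℝ with (S.card : ℝ) · (2r)^d < 1. Then there exists a point y in the unit cube Set.Icc (0 : Fin d → ℝ) 1 such that dist(y, s) ≥ r for every s ∈ S, where dist is the sup metric on Fin d → ℝ. -/
import Mathlib

/-- Volume argument: too few points cannot `r`-cover the unit cube in the sup
metric, so some point of the cube is at distance at least `r` from every
sample point. -/
theorem exists_point_far_from_samples
    (d : ℕ) (hd : 1 ≤ d) (r : ℝ) (hr : 0 < r)
    (S : Finset (Fin d → ℝ))
    (hcard : (S.card : ℝ) * (2 * r) ^ d < 1) :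
    ∃ y ∈ Set.Icc (0 : Fin d → ℝ) 1, ∀ s ∈ S, r ≤ dist y s := by
  by_contra h
  push_neg at h
  have hcover : Set.Icc (0 : Fin d → ℝ) 1 ⊆ ⋃ s ∈ S, Metric.ball s r := by
    intro y hy
    obtain ⟨s, hs, hlt⟩ := h y hy
    exact Set.mem_biUnion hs (by simpa [Metric.mem_ball, dist_comm] using hlt)
  have hvol : MeasureTheory.volume (Set.Icc (0 : Fin d → ℝ) 1) = 1 := by
    simp [Real.volume_Icc_pi]
  have hb : ∀ s : Fin d → ℝ, MeasureTheory.volume (Metric.ball s r)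
      = ENNReal.ofReal ((2 * r) ^ d) := by
    intro s
    simpa using Real.volume_pi_ball s hr
  have hle : (1 : ENNReal) ≤ S.card * ENNReal.ofReal ((2 * r) ^ d) := by
    calc (1 : ENNReal) = MeasureTheory.volume (Set.Icc (0 : Fin d → ℝ) 1) := hvol.symm
      _ ≤ MeasureTheory.volume (⋃ s ∈ S, Metric.ball s r) :=
          MeasureTheory.measure_mono hcover
      _ ≤ ∑ s ∈ S, MeasureTheory.volume (Metric.ball s r) :=
          MeasureTheory.measure_biUnion_finset_le S _
      _ = S.card * ENNReal.ofReal ((2 * r) ^ d) := by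
          simp [hb, Finset.sum_const, mul_comm]
  have : (1 : ℝ) ≤ (S.card : ℝ) * (2 * r) ^ d := by
    have hpow : (0:ℝ) ≤ (2 * r) ^ d := by positivity
    have := ENNReal.toReal_mono (by
      refine ENNReal.mul_ne_top (ENNReal.natCast_ne_top _) ENNReal.ofReal_ne_top) hle
    simpa [ENNReal.toReal_mul, ENNReal.toReal_ofReal hpow] using this
  linarith
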